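/- Let T be a simple graph on a finite vertex type that is a tree, and let u ≠ v be vertices of T that are not adjacent in T. Let T' be the graph obtained from T by adding the edge {u,v}. Then T' contains a cycle whose edge set equals {u,v} together with the edge set of the unique path from u to v in T; moreover, the edge set of every cycle in T' equals this set. -/

import Mathlib

open SimpleGraph

/-- In a path ending at `b`, an edge containing `b` must be the last edge. -/
lemma path_edge_last {V : Type*} {G : SimpleGraph V} {c : V} :
    ∀ {a b : V} (p : G.Walk a b), p.IsPath → s(b, c) ∈ p.edges →
      ∃ (p' : G.Walk a c) (h : G.Adj c b), p = p'.concat h := by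
  intro a b p
  induction p with
  | nil => simp
  | @cons s m e h' p' ih =>
    intro hp he
    rw [SimpleGraph.Walk.edges_cons, List.mem_cons] at he
    rw [SimpleGraph.Walk.cons_isPath_iff] at hp
    rcases he with he | he
    · rw [Sym2.eq_iff] at he
      rcases he with ⟨hb, hc⟩ | ⟨hb, hc⟩
      · exact absurd (hb ▸ SimpleGraph.Walk.end_mem_support p') hp.2
      · subst hc; subst hb
        have hnil : p' = SimpleGraph.Walk.nil :=
          SimpleGraph.Walk.isPath_iff_eq_nil.1 hp.1
        subst hnil
        exact ⟨SimpleGraph.Walk.nil, h', rfl⟩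
    · obtain ⟨p'', h2, rfl⟩ := ih hp.1 he
      exact ⟨SimpleGraph.Walk.cons h' p'', h2, by simp [SimpleGraph.Walk.concat]⟩

theorem tree_add_edge_cycle {V : Type*} [Fintype V] [DecidableEq V]
    (T : SimpleGraph V) (hT : T.IsTree) (u v : V) (huv : u ≠ v) (hadj : ¬ T.Adj u v)
    (q : T.Walk u v) (hq : q.IsPath) :
    (∃ (w : V) (p : (T ⊔ SimpleGraph.fromEdgeSet {s(u, v)}).Walk w w),
        p.IsCycle ∧ {e : Sym2 V | e ∈ p.edges} = insert s(u, v) {e : Sym2 V | e ∈ q.edges}) ∧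
      ∀ (w : V) (p : (T ⊔ SimpleGraph.fromEdgeSet {s(u, v)}).Walk w w), p.IsCycle →
        {e : Sym2 V | e ∈ p.edges} = insert s(u, v) {e : Sym2 V | e ∈ q.edges} := by
  set G' := T ⊔ SimpleGraph.fromEdgeSet {s(u, v)} with hG'
  have hedge : ∀ e ∈ G'.edgeSet, e ≠ s(u, v) → e ∈ T.edgeSet := by
    intro e he hne
    rw [hG', edgeSet_sup, edgeSet_fromEdgeSet] at he
    rcases he with he | he
    · exact he
    · exact absurd he.1 (by simpa using hne)
  have hsq : s(u, v) ∉ q.edges := fun h => hadj (q.edges_subset_edgeSet h)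
  have huniv : ∀ (w : V) (p : G'.Walk w w), p.IsCycle →
      {e : Sym2 V | e ∈ p.edges} = insert s(u, v) {e : Sym2 V | e ∈ q.edges} := by
    intro w p hp
    by_cases hmem : s(u, v) ∈ p.edges
    case neg =>
      exfalso
      have hsub : ∀ e ∈ p.edges, e ∈ T.edgeSet := fun e he =>
        hedge e (p.edges_subset_edgeSet he) (fun h => hmem (h ▸ he))
      exact hT.IsAcyclic _ (hp.transfer hsub)
    case pos =>
      have hu' : u ∈ p.support := Walk.fst_mem_support_of_mem_edges p hmem
      have hrot : ∀ e : Sym2 V, e ∈ (p.rotate u hu').edges ↔ e ∈ p.edges :=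
        fun e => (p.rotate_edges u hu').perm.mem_iff
      have hcyc : (p.rotate u hu').IsCycle := hp.rotate hu'
      have hmem' : s(u, v) ∈ (p.rotate u hu').edges := (hrot _).2 hmem
      have key : {e : Sym2 V | e ∈ (p.rotate u hu').edges}
          = insert s(u, v) {e : Sym2 V | e ∈ q.edges} := by
        generalize (p.rotate u hu') = c at hcyc hmem'
        cases c with
        | nil => simp at hcyc
        | @cons _ x _ h1 r =>
          rw [Walk.cons_isCycle_iff] at hcyc
          obtain ⟨hr, hux⟩ := hcyc
          by_cases hx : x = v
          · subst hx
            have hrT : ∀ e ∈ r.edges, e ∈ T.edgeSet := fun e he =>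
              hedge e (r.edges_subset_edgeSet he) (fun h => hux (h ▸ he))
            have hrPath : ((r.transfer T hrT).reverse).IsPath := (hr.transfer hrT).reverse
            have hwalk : (r.transfer T hrT).reverse = q := Subtype.mk_eq_mk.1
              (hT.IsAcyclic.path_unique ⟨(r.transfer T hrT).reverse, hrPath⟩ ⟨q, hq⟩)
            have hmemr : ∀ e : Sym2 V, e ∈ r.edges ↔ e ∈ q.edges := by
              intro e
              rw [← hwalk, Walk.edges_reverse, List.mem_reverse, Walk.edges_transfer]
            ext e
            simp only [Walk.edges_cons, List.mem_cons, Set.mem_setOf_eq, Set.mem_insert_iff,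
              hmemr e]
          · have huvx : s(u, v) ≠ s(u, x) := by
              intro h
              rcases Sym2.eq_iff.1 h with ⟨-, h2⟩ | ⟨-, h2⟩
              · exact hx h2.symm
              · exact huv h2.symm
            have hmr : s(u, v) ∈ r.edges := by
              rcases List.mem_cons.1 hmem' with h | h
              · exact absurd h huvx
              · exact h
            obtain ⟨p', h2, rfl⟩ := path_edge_last r hr hmr
            have hrsup : (p'.concat h2).support = p'.support ++ [u] := by
              rw [Walk.support_concat]
            have hup' : u ∉ p'.support := by
              have hnd := hr.support_nodup
              rw [hrsup] at hnd
              have := List.disjoint_of_nodup_append hnd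
              exact fun h => this h (by simp)
            have hp'path : p'.IsPath := by
              have h' := hr
              rw [Walk.concat_eq_append] at h'
              exact h'.of_append_left
            have hconsPath : (Walk.cons h1 p').IsPath :=
              (Walk.cons_isPath_iff _ _).2 ⟨hp'path, hup'⟩
            have hsvu : s(u, v) ∉ p'.edges := by
              have hnd := hr.isTrail.edges_nodup
              rw [Walk.edges_concat, List.concat_eq_append] at hnd
              have := List.disjoint_of_nodup_append hnd
              intro h
              exact this h (by rw [Sym2.eq_swap]; simp)
            have hconsT : ∀ e ∈ (Walk.cons h1 p').edges, e ∈ T.edgeSet := by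
              intro e he
              refine hedge e ((Walk.cons h1 p').edges_subset_edgeSet he) ?_
              rintro rfl
              rcases List.mem_cons.1 he with h | h
              · exact huvx h
              · exact hsvu h
            have hconsPathT : ((Walk.cons h1 p').transfer T hconsT).IsPath :=
              hconsPath.transfer hconsT
            have hwalk : (Walk.cons h1 p').transfer T hconsT = q := Subtype.mk_eq_mk.1
              (hT.IsAcyclic.path_unique ⟨(Walk.cons h1 p').transfer T hconsT, hconsPathT⟩ ⟨q, hq⟩)
            have hedges : s(u, x) :: p'.edges = q.edges := by
              rw [← hwalk, Walk.edges_transfer, Walk.edges_cons]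
            have hswap : s(v, u) = s(u, v) := Sym2.eq_swap
            ext e
            simp only [Walk.edges_cons, Walk.edges_concat, List.concat_eq_append,
              List.mem_cons, List.mem_append, List.mem_singleton, Set.mem_setOf_eq,
              Set.mem_insert_iff, ← hedges, hswap]
            tauto
      ext e
      rw [← key]
      exact ⟨fun h => (hrot e).2 h, fun h => (hrot e).1 h⟩
  refine ⟨?_, huniv⟩
  have hadj' : G'.Adj u v := by
    rw [hG', sup_adj, fromEdgeSet_adj]
    exact Or.inr ⟨rfl, huv⟩
  have hqT : ∀ e ∈ q.edges, e ∈ G'.edgeSet := by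
    intro e he
    rw [hG', edgeSet_sup]
    exact Or.inl (q.edges_subset_edgeSet he)
  have hne : s(u, v) ∉ ((q.transfer G' hqT).reverse).edges := by
    rw [Walk.edges_reverse, List.mem_reverse, Walk.edges_transfer]
    exact hsq
  have hcyc : (Walk.cons hadj' (q.transfer G' hqT).reverse).IsCycle :=
    Path.cons_isCycle ⟨(q.transfer G' hqT).reverse, ((hq.transfer hqT).reverse)⟩ hadj' hne
  exact ⟨u, _, hcyc, huniv u _ hcyc⟩
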